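/- Under the conditions (i) ⟨ψ,Y⟩ = ⟨ψ,Y_u⟩ = ⟨ψ,Y_v⟩ = 0 and (ii) ψ_u ∈ Span{Y, Y_v}, ψ_v ∈ Span{Y, Y_u}, where ⟨Y,Y⟩ = ⟨Y_u,Y_u⟩ = ⟨Y_v,Y_v⟩ = 0, ⟨Y_u,Y_v⟩ = 1/2, ⟨Y,Y_u⟩ = ⟨Y,Y_v⟩ = 0, one has ⟨ψ, Y_{uv}⟩ = 0 (so ψ is a normal section) and ⟨ψ,ψ⟩ is constant. -/

import Mathlib

private lemma Bsymm {m : ℕ} (η : Fin m → ℝ) (B : (Fin m → ℝ) → (Fin m → ℝ) → ℝ)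
    (hBdef : ∀ x y, B x y = ∑ i, η i * x i * y i) (x y : Fin m → ℝ) :
    B x y = B y x := by
  rw [hBdef, hBdef]; exact Finset.sum_congr rfl (fun i _ => by ring)

private lemma Blin {m : ℕ} (η : Fin m → ℝ) (B : (Fin m → ℝ) → (Fin m → ℝ) → ℝ)
    (hBdef : ∀ x y, B x y = ∑ i, η i * x i * y i) (a b : ℝ) (x y z : Fin m → ℝ) :
    B (a • x + b • y) z = a * B x z + b * B y z := by
  rw [hBdef, hBdef, hBdef, Finset.mul_sum, Finset.mul_sum, ← Finset.sum_add_distrib]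
  exact Finset.sum_congr rfl (fun i _ => by
    simp [Pi.add_apply, Pi.smul_apply, smul_eq_mul]; ring)

theorem stmt_16 (m : ℕ) (η : Fin m → ℝ) (hη : ∀ i, η i = 1 ∨ η i = -1)
    (B : (Fin m → ℝ) → (Fin m → ℝ) → ℝ)
    (hBdef : ∀ x y, B x y = ∑ i, η i * x i * y i)
    (ψ Y Yu Yv Yuv ψu ψv : ℝ → ℝ → Fin m → ℝ)
    (hYu : ∀ u v i, HasDerivAt (fun u' => Y u' v i) (Yu u v i) u)
    (hYv : ∀ u v i, HasDerivAt (fun v' => Y u v' i) (Yv u v i) v)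
    (hYuv : ∀ u v i, HasDerivAt (fun u' => Yv u' v i) (Yuv u v i) u)
    (hψu : ∀ u v i, HasDerivAt (fun u' => ψ u' v i) (ψu u v i) u)
    (hψv : ∀ u v i, HasDerivAt (fun v' => ψ u v' i) (ψv u v i) v)
    (hYY : ∀ u v, B (Y u v) (Y u v) = 0)
    (hYuYu : ∀ u v, B (Yu u v) (Yu u v) = 0)
    (hYvYv : ∀ u v, B (Yv u v) (Yv u v) = 0)
    (hYuYv : ∀ u v, B (Yu u v) (Yv u v) = 1/2)
    (hYYu : ∀ u v, B (Y u v) (Yu u v) = 0)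
    (hYYv : ∀ u v, B (Y u v) (Yv u v) = 0)
    (hψY : ∀ u v, B (ψ u v) (Y u v) = 0)
    (hψYu : ∀ u v, B (ψ u v) (Yu u v) = 0)
    (hψYv : ∀ u v, B (ψ u v) (Yv u v) = 0)
    (hspanu : ∀ u v, ψu u v ∈ Submodule.span ℝ {Y u v, Yv u v})
    (hspanv : ∀ u v, ψv u v ∈ Submodule.span ℝ {Y u v, Yu u v}) :
    (∀ u v, B (ψ u v) (Yuv u v) = 0)
    ∧ (∀ u v u' v', B (ψ u v) (ψ u v) = B (ψ u' v') (ψ u' v')) := by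
  -- ψu is orthogonal to anything orthogonal to Y and Yv
  have hψuB : ∀ u v (z : Fin m → ℝ), B (Y u v) z = 0 → B (Yv u v) z = 0 →
      B (ψu u v) z = 0 := by
    intro u v z h1 h2
    obtain ⟨a, b, hab⟩ := Submodule.mem_span_pair.mp (hspanu u v)
    rw [← hab, Blin η B hBdef, h1, h2]; ring
  have hψvB : ∀ u v (z : Fin m → ℝ), B (Y u v) z = 0 → B (Yu u v) z = 0 →
      B (ψv u v) z = 0 := by
    intro u v z h1 h2
    obtain ⟨a, b, hab⟩ := Submodule.mem_span_pair.mp (hspanv u v)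
    rw [← hab, Blin η B hBdef, h1, h2]; ring
  -- derivative in u of B (ψ u v) (Yv u v)
  have key : ∀ u v, B (ψu u v) (Yv u v) + B (ψ u v) (Yuv u v) = 0 := by
    intro u v
    have hd : HasDerivAt (fun u' => B (ψ u' v) (Yv u' v))
        (B (ψu u v) (Yv u v) + B (ψ u v) (Yuv u v)) u := by
      have : HasDerivAt (fun u' => ∑ i, η i * ψ u' v i * Yv u' v i)
          (∑ i, η i * (ψu u v i * Yv u v i + ψ u v i * Yuv u v i)) u := by
        apply HasDerivAt.fun_sum
        intro i _
        have := ((hψu u v i).mul (hYuv u v i)).const_mul (η i)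
        simpa [mul_assoc] using this
      have heq : (fun u' => B (ψ u' v) (Yv u' v)) =
          fun u' => ∑ i, η i * ψ u' v i * Yv u' v i := by
        funext u'; rw [hBdef]
      rw [heq, hBdef, hBdef]
      convert this using 1
      rw [← Finset.sum_add_distrib]
      exact Finset.sum_congr rfl (fun i _ => by ring)
    have hconst : HasDerivAt (fun u' : ℝ => B (ψ u' v) (Yv u' v)) 0 u := by
      have : (fun u' : ℝ => B (ψ u' v) (Yv u' v)) = fun _ => (0 : ℝ) := by
        funext u'; exact hψYv u' v
      rw [this]; exact hasDerivAt_const u 0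
    exact hd.unique hconst
  have main1 : ∀ u v, B (ψ u v) (Yuv u v) = 0 := by
    intro u v
    have h1 : B (ψu u v) (Yv u v) = 0 := hψuB u v _ (hYYv u v) (hYvYv u v)
    have := key u v
    linarith
  refine ⟨main1, ?_⟩
  -- constancy of B ψ ψ
  have hderu : ∀ u v, HasDerivAt (fun u' => B (ψ u' v) (ψ u' v)) 0 u := by
    intro u v
    have hd : HasDerivAt (fun u' => ∑ i, η i * ψ u' v i * ψ u' v i)
        (∑ i, η i * (ψu u v i * ψ u v i + ψ u v i * ψu u v i)) u := by
      apply HasDerivAt.fun_sum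
      intro i _
      have := ((hψu u v i).mul (hψu u v i)).const_mul (η i)
      simpa [mul_assoc] using this
    have heq : (fun u' => B (ψ u' v) (ψ u' v)) =
        fun u' => ∑ i, η i * ψ u' v i * ψ u' v i := by
      funext u'; rw [hBdef]
    rw [heq]
    convert hd using 1
    have hz : B (ψu u v) (ψ u v) = 0 := by
      apply hψuB
      · rw [Bsymm η B hBdef]; exact hψY u v
      · rw [Bsymm η B hBdef]; exact hψYv u v
    have : (∑ i, η i * (ψu u v i * ψ u v i + ψ u v i * ψu u v i)) =
        2 * B (ψu u v) (ψ u v) := by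
      rw [hBdef, Finset.mul_sum]
      exact Finset.sum_congr rfl (fun i _ => by ring)
    rw [this, hz]; ring
  have hderv : ∀ u v, HasDerivAt (fun v' => B (ψ u v') (ψ u v')) 0 v := by
    intro u v
    have hd : HasDerivAt (fun v' => ∑ i, η i * ψ u v' i * ψ u v' i)
        (∑ i, η i * (ψv u v i * ψ u v i + ψ u v i * ψv u v i)) v := by
      apply HasDerivAt.fun_sum
      intro i _
      have := ((hψv u v i).mul (hψv u v i)).const_mul (η i)
      simpa [mul_assoc] using this
    have heq : (fun v' => B (ψ u v') (ψ u v')) =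
        fun v' => ∑ i, η i * ψ u v' i * ψ u v' i := by
      funext v'; rw [hBdef]
    rw [heq]
    convert hd using 1
    have hz : B (ψv u v) (ψ u v) = 0 := by
      apply hψvB
      · rw [Bsymm η B hBdef]; exact hψY u v
      · rw [Bsymm η B hBdef]; exact hψYu u v
    have : (∑ i, η i * (ψv u v i * ψ u v i + ψ u v i * ψv u v i)) =
        2 * B (ψv u v) (ψ u v) := by
      rw [hBdef, Finset.mul_sum]
      exact Finset.sum_congr rfl (fun i _ => by ring)
    rw [this, hz]; ring
  intro u v u' v'
  have cu : ∀ v u₁ u₂, B (ψ u₁ v) (ψ u₁ v) = B (ψ u₂ v) (ψ u₂ v) := by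
    intro v u₁ u₂
    exact is_const_of_deriv_eq_zero
      (fun x => (hderu x v).differentiableAt)
      (fun x => (hderu x v).deriv) u₁ u₂
  have cv : ∀ u v₁ v₂, B (ψ u v₁) (ψ u v₁) = B (ψ u v₂) (ψ u v₂) := by
    intro u v₁ v₂
    exact is_const_of_deriv_eq_zero
      (fun x => (hderv u x).differentiableAt)
      (fun x => (hderv u x).deriv) v₁ v₂
  calc B (ψ u v) (ψ u v) = B (ψ u' v) (ψ u' v) := cu v u u'
    _ = B (ψ u' v') (ψ u' v') := cv u' v v'
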